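/- Let p ∈ (1,2), ε > 0, k > 0 and define Ψ(k,p,ε) as the explicit rational function Ψ(k,p,ε) = (1+ε)² + 1 - (1+ε)·[(1+k²+(1+ε)²k²)(2(p-1)(1+ε)k² + (2-p)(1+(1+ε)²k²))] / [(1+(1+ε)²k²)(1+(1+ε)²k²+(p-1)k²)]. Then the partial derivative of Ψ with respect to p is nonnegative, i.e., Ψ is monotone nondecreasing in p on (1,2). -/

import Mathlib

set_option maxHeartbeats 1000000


/-- The rational function `Ψ(k,p,ε)` appearing in the proof of Proposition 3.1. -/
noncomputable def Psi (k p ε : ℝ) : ℝ :=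
  (1 + ε) ^ 2 + 1 - (1 + ε) *
    ((1 + k ^ 2 + (1 + ε) ^ 2 * k ^ 2) *
      (2 * (p - 1) * (1 + ε) * k ^ 2 + (2 - p) * (1 + (1 + ε) ^ 2 * k ^ 2))) /
    ((1 + (1 + ε) ^ 2 * k ^ 2) * (1 + (1 + ε) ^ 2 * k ^ 2 + (p - 1) * k ^ 2))

lemma psi_hasDerivAt (ε k : ℝ) (hk : 0 < k) (p : ℝ) (hp : (1:ℝ) < p) :
    HasDerivAt (fun q => Psi k q ε)
      ((1 + ε) * (1 + k ^ 2 + (1 + ε) ^ 2 * k ^ 2) * (1 + (1 + ε) ^ 2 * k ^ 2) ^ 2 *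
        (1 + ε ^ 2 * k ^ 2) /
        ((1 + (1 + ε) ^ 2 * k ^ 2) * (1 + (1 + ε) ^ 2 * k ^ 2 + (p - 1) * k ^ 2)) ^ 2) p := by
  have hk2 : (0:ℝ) < k ^ 2 := by positivity
  set u : ℝ := 1 + (1 + ε) ^ 2 * k ^ 2 with hu_def
  set A : ℝ := 1 + k ^ 2 + (1 + ε) ^ 2 * k ^ 2 with hA_def
  have hu : 0 < u := by positivity
  set m1 : ℝ := (1 + ε) * A * (2 * (1 + ε) * k ^ 2 - u) with hm1
  set b1 : ℝ := (1 + ε) * A * (2 * u - 2 * (1 + ε) * k ^ 2) with hb1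
  set m2 : ℝ := u * k ^ 2 with hm2
  set b2 : ℝ := u * (u - k ^ 2) with hb2
  have hden_pos : 0 < m2 * p + b2 := by
    have h2 : 0 < u + (p - 1) * k ^ 2 := by nlinarith
    nlinarith [mul_pos hu h2]
  have hden_ne : m2 * p + b2 ≠ 0 := ne_of_gt hden_pos
  have hnum : HasDerivAt (fun q : ℝ => m1 * q + b1) m1 p := by
    simpa using ((hasDerivAt_id p).const_mul m1).add_const b1
  have hden : HasDerivAt (fun q : ℝ => m2 * q + b2) m2 p := by
    simpa using ((hasDerivAt_id p).const_mul m2).add_const b2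
  have hdiv := hnum.div hden hden_ne
  have hf := (hasDerivAt_const p ((1 + ε) ^ 2 + 1)).sub hdiv
  have hfun : (fun q => Psi k q ε) =
      fun q : ℝ => (1 + ε) ^ 2 + 1 - (m1 * q + b1) / (m2 * q + b2) := by
    funext q
    simp only [Psi, hm1, hb1, hm2, hb2, hA_def, hu_def]
    have hq : (1 + (1 + ε) ^ 2 * k ^ 2) * (1 + (1 + ε) ^ 2 * k ^ 2 + (q - 1) * k ^ 2)
        = (1 + (1 + ε) ^ 2 * k ^ 2) * k ^ 2 * q
          + (1 + (1 + ε) ^ 2 * k ^ 2) * ((1 + (1 + ε) ^ 2 * k ^ 2) - k ^ 2) := by ring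
    rw [hq]
    ring
  rw [hfun]
  convert hf using 1
  · rfl
  · rfl
  · rfl
  have hden2 : ((m2 * p + b2)) = u * (u + (p - 1) * k ^ 2) := by
    simp only [hm2, hb2]; ring
  rw [hden2]
  field_simp
  simp only [hm1, hb1, hm2, hb2, hA_def, hu_def]
  ring

/-- For fixed `ε > 0`, `k > 0`, the partial derivative of `Ψ` with respect to `p`
is nonnegative on `(1,2)`, i.e. `Ψ` is monotone nondecreasing in `p` on `(1,2)`. -/
theorem stmt4 (ε k : ℝ) (hε : 0 < ε) (hk : 0 < k) :
    (∀ p ∈ Set.Ioo (1 : ℝ) 2, 0 ≤ deriv (fun q => Psi k q ε) p) ∧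
      MonotoneOn (fun q => Psi k q ε) (Set.Ioo (1 : ℝ) 2) := by
  have hderiv : ∀ p ∈ Set.Ioo (1 : ℝ) 2, 0 ≤ deriv (fun q => Psi k q ε) p := by
    intro p hp
    rw [(psi_hasDerivAt ε k hk p hp.1).deriv]
    have h1 : (0:ℝ) < 1 + (1 + ε) ^ 2 * k ^ 2 := by positivity
    have h2 : (0:ℝ) < 1 + (1 + ε) ^ 2 * k ^ 2 + (p - 1) * k ^ 2 := by
      nlinarith [hp.1, sq_nonneg k]
    have h3 : (0:ℝ) < 1 + ε := by linarith
    positivity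
  refine ⟨hderiv, ?_⟩
  have hconv : Convex ℝ (Set.Ioo (1 : ℝ) 2) := convex_Ioo 1 2
  have hdiff : DifferentiableOn ℝ (fun q => Psi k q ε) (Set.Ioo (1 : ℝ) 2) := by
    intro p hp
    exact ((psi_hasDerivAt ε k hk p hp.1).differentiableAt).differentiableWithinAt
  refine monotoneOn_of_deriv_nonneg hconv hdiff.continuousOn ?_ ?_
  · rwa [interior_Ioo]
  · intro p hp
    rw [interior_Ioo] at hp
    exact hderiv p hp
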